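/- Let (Ω, ℱ, ℙ) be a probability space, S a finite nonempty state space, γ ∈ ℝ with 0 < γ < 1, α ∈ ℝ, and N a positive natural number. Let d : S → ℝ, r̄ : S → ℝ, and P : S × S → ℝ. Let V_t : Ω → (S → ℝ) be a random vector with each coordinate integrable. For each k ∈ {1, …, N}, let S_k : Ω → S, R_k : Ω → ℝ (integrable, with R_k · 1_{S_k = s} integrable for each s), and S'_k : Ω → S be random variables such that: (i) the triple (S_k, R_k, S'_k) is independent of V_t; (ii) 𝔼[1_{S_k = s}] = d(s) for every s; (iii) 𝔼[1_{S_k = s} · R_k] = d(s) · r̄(s) for every s; (iv) 𝔼[1_{S_k = s} · 1_{S'_k = x}] = d(s) · P s x for every s, x. Define the random vector V_{t+1} : Ω → (S → ℝ) by V_{t+1}(ω)(s) = V_t(ω)(s) + α ∑_{k=1}^{N} 1_{S_k(ω) = s} · (R_k(ω) + γ V_t(ω)(S'_k(ω)) − V_t(ω)(s)). Then for every s ∈ S, 𝔼[V_{t+1}(·)(s)] = 𝔼[V_t(·)(s)] + α N d(s) · ( r̄(s) + γ ∑_{x ∈ S} P s x · 𝔼[V_t(·)(x)] − 𝔼[V_t(·)(s)]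 ). -/

import Mathlib

open MeasureTheory ProbabilityTheory

/-- Mean-evolution equation of the analytical MSE theorem for batched tabular
TD learning: with `N` i.i.d. transition samples `(S_k, R_k, S'_k)` per round,
independent of the current estimate `V_t`, whose marginals satisfy
`𝔼[1_{S_k=s}] = d(s)`, `𝔼[1_{S_k=s} R_k] = d(s) r̄(s)` and
`𝔼[1_{S_k=s} 1_{S'_k=x}] = d(s) P s x`, the batched TD update
`V_{t+1}(s) = V_t(s) + α ∑_k 1_{S_k=s}(R_k + γ V_t(S'_k) − V_t(s))`
satisfies, in the mean,
`𝔼[V_{t+1}(s)] = 𝔼[V_t(s)] + α N d(s)(r̄(s) + γ (P 𝔼[V_t])(s) − 𝔼[V_t(s)])`. -/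
theorem td_mean_evolution
    {Ω : Type*} [MeasurableSpace Ω] (μ : Measure Ω) [IsProbabilityMeasure μ]
    {S : Type*} [Fintype S] [Nonempty S] [DecidableEq S]
    [MeasurableSpace S] [MeasurableSingletonClass S]
    (γ α : ℝ) (hγ0 : 0 < γ) (hγ1 : γ < 1)
    (N : ℕ) (hN : 0 < N)
    (d rbar : S → ℝ) (P : S → S → ℝ)
    (Vt : Ω → S → ℝ)
    (hVt_meas : Measurable Vt)
    (hVt_int : ∀ s, Integrable (fun ω => Vt ω s) μ)
    (Sk : Fin N → Ω → S) (Rk : Fin N → Ω → ℝ) (Sk' : Fin N → Ω → S)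
    (hSk_meas : ∀ k, Measurable (Sk k))
    (hRk_meas : ∀ k, Measurable (Rk k))
    (hSk'_meas : ∀ k, Measurable (Sk' k))
    (hRk_int : ∀ k, Integrable (Rk k) μ)
    (hInd_int : ∀ k, ∀ s : S,
      Integrable (fun ω => (if Sk k ω = s then (1 : ℝ) else 0) * Rk k ω) μ)
    (hindep : ∀ k,
      IndepFun (fun ω => (Sk k ω, Rk k ω, Sk' k ω)) Vt μ)
    (hd : ∀ k, ∀ s : S,
      ∫ ω, (if Sk k ω = s then (1 : ℝ) else 0) ∂μ = d s)
    (hr : ∀ k, ∀ s : S,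
      ∫ ω, (if Sk k ω = s then (1 : ℝ) else 0) * Rk k ω ∂μ = d s * rbar s)
    (hP : ∀ k, ∀ s x : S,
      ∫ ω, (if Sk k ω = s then (1 : ℝ) else 0) *
        (if Sk' k ω = x then (1 : ℝ) else 0) ∂μ = d s * P s x)
    (Vt1 : Ω → S → ℝ)
    (hVt1 : ∀ ω s, Vt1 ω s =
      Vt ω s + α * ∑ k : Fin N,
        (if Sk k ω = s then (1 : ℝ) else 0) *
          (Rk k ω + γ * Vt ω (Sk' k ω) - Vt ω s)) :
    ∀ s : S,
      ∫ ω, Vt1 ω s ∂μ =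
        (∫ ω, Vt ω s ∂μ) +
          α * N * d s *
            (rbar s + γ * (∑ x, P s x * ∫ ω, Vt ω x ∂μ) - ∫ ω, Vt ω s ∂μ) := by
  intro s
  classical
  -- indicator notation
  set I : Fin N → Ω → ℝ := fun k ω => if Sk k ω = s then (1 : ℝ) else 0 with hIdef
  set J : Fin N → S → Ω → ℝ := fun k x ω => if Sk' k ω = x then (1 : ℝ) else 0 with hJdef
  have hImeas : ∀ k, Measurable (I k) := fun k =>
    Measurable.ite ((hSk_meas k) (measurableSet_singleton s)) measurable_const measurable_const
  have hJmeas : ∀ k x, Measurable (J k x) := fun k x =>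
    Measurable.ite ((hSk'_meas k) (measurableSet_singleton x)) measurable_const measurable_const
  have hVx_meas : ∀ x : S, Measurable fun ω => Vt ω x := fun x =>
    (measurable_pi_apply x).comp hVt_meas
  -- independence-based factorizations
  have hA : ∀ k, ∫ ω, I k ω * Vt ω s ∂μ = d s * ∫ ω, Vt ω s ∂μ := by
    intro k
    have hφ : Measurable (fun p : S × ℝ × S => if p.1 = s then (1 : ℝ) else 0) :=
      Measurable.ite (measurable_fst (measurableSet_singleton s)) measurable_const
        measurable_const
    have hψ : Measurable (fun v : S → ℝ => v s) := measurable_pi_apply s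
    have hind : IndepFun (I k) (fun ω => Vt ω s) μ := (hindep k).comp hφ hψ
    have := hind.integral_fun_mul_eq_mul_integral (hImeas k).aestronglyMeasurable
      (hVx_meas s).aestronglyMeasurable
    rw [this, hd k s]
  have hB : ∀ k x, ∫ ω, I k ω * (J k x ω * Vt ω x) ∂μ
      = d s * P s x * ∫ ω, Vt ω x ∂μ := by
    intro k x
    have hφ : Measurable (fun p : S × ℝ × S =>
        (if p.1 = s then (1 : ℝ) else 0) * (if p.2.2 = x then (1 : ℝ) else 0)) := by
      refine Measurable.mul ?_ ?_
      · exact Measurable.ite (measurable_fst (measurableSet_singleton s)) measurable_const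
          measurable_const
      · exact Measurable.ite ((measurable_snd.snd) (measurableSet_singleton x))
          measurable_const measurable_const
    have hψ : Measurable (fun v : S → ℝ => v x) := measurable_pi_apply x
    have hind : IndepFun (fun ω => I k ω * J k x ω) (fun ω => Vt ω x) μ :=
      (hindep k).comp hφ hψ
    have hIJmeas : Measurable fun ω => I k ω * J k x ω := (hImeas k).mul (hJmeas k x)
    have h := hind.integral_fun_mul_eq_mul_integral hIJmeas.aestronglyMeasurable
      (hVx_meas x).aestronglyMeasurable
    calc ∫ ω, I k ω * (J k x ω * Vt ω x) ∂μ
        = ∫ ω, (I k ω * J k x ω) * Vt ω x ∂μ := by simp only [mul_assoc]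
      _ = (∫ ω, I k ω * J k x ω ∂μ) * ∫ ω, Vt ω x ∂μ := h
      _ = d s * P s x * ∫ ω, Vt ω x ∂μ := by rw [hP k s x]
  -- integrability facts
  have hint2 : ∀ k x, Integrable (fun ω => I k ω * (J k x ω * Vt ω x)) μ := by
    intro k x
    have : Integrable (fun ω => (I k ω * J k x ω) * Vt ω x) μ := by
      refine (hVt_int x).bdd_mul ((hImeas k).mul (hJmeas k x)).aestronglyMeasurable
        (c := 1) (Filter.Eventually.of_forall ?_)
      intro ω
      simp only [hIdef, hJdef]
      rcases ite_eq_or_eq (Sk k ω = s) (1 : ℝ) 0 with h1 | h1 <;>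
        rcases ite_eq_or_eq (Sk' k ω = x) (1 : ℝ) 0 with h2 | h2 <;>
          rw [h1, h2] <;> norm_num
    simpa only [mul_assoc] using this
  have hint3 : ∀ k, Integrable (fun ω => I k ω * Vt ω s) μ := by
    intro k
    refine (hVt_int s).bdd_mul (hImeas k).aestronglyMeasurable (c := 1)
      (Filter.Eventually.of_forall ?_)
    intro ω
    simp only [hIdef]
    rcases ite_eq_or_eq (Sk k ω = s) (1 : ℝ) 0 with h1 | h1 <;> rw [h1] <;> norm_num
  -- rewrite the per-sample term
  have hg_eq : ∀ k, (fun ω => I k ω * (Rk k ω + γ * Vt ω (Sk' k ω) - Vt ω s))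
      = fun ω => I k ω * Rk k ω + γ * ∑ x, I k ω * (J k x ω * Vt ω x) - I k ω * Vt ω s := by
    intro k
    funext ω
    have hval : Vt ω (Sk' k ω) = ∑ x, J k x ω * Vt ω x := by
      simp [hJdef, ite_mul, Finset.sum_ite_eq]
    rw [hval, ← Finset.mul_sum]
    ring
  -- integral of the per-sample term
  have hintR : ∀ k, Integrable (fun ω => I k ω * Rk k ω) μ := fun k => hInd_int k s
  have hintSum : ∀ k, Integrable
      (fun ω => γ * ∑ x, I k ω * (J k x ω * Vt ω x)) μ := fun k =>
    (integrable_finset_sum _ (fun x _ => hint2 k x)).const_mul γ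
  have hgint : ∀ k, Integrable
      (fun ω => I k ω * (Rk k ω + γ * Vt ω (Sk' k ω) - Vt ω s)) μ := by
    intro k
    rw [hg_eq k]
    exact ((hintR k).add (hintSum k)).sub (hint3 k)
  have hgval : ∀ k, ∫ ω, I k ω * (Rk k ω + γ * Vt ω (Sk' k ω) - Vt ω s) ∂μ
      = d s * rbar s + γ * (∑ x, d s * P s x * ∫ ω, Vt ω x ∂μ) - d s * ∫ ω, Vt ω s ∂μ := by
    intro k
    rw [hg_eq k]
    have h1 : ∫ ω, I k ω * Rk k ω + γ * ∑ x, I k ω * (J k x ω * Vt ω x)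
        - I k ω * Vt ω s ∂μ
        = (∫ ω, I k ω * Rk k ω + γ * ∑ x, I k ω * (J k x ω * Vt ω x) ∂μ)
          - ∫ ω, I k ω * Vt ω s ∂μ :=
      integral_sub ((hintR k).add (hintSum k)) (hint3 k)
    have h2 : ∫ ω, I k ω * Rk k ω + γ * ∑ x, I k ω * (J k x ω * Vt ω x) ∂μ
        = (∫ ω, I k ω * Rk k ω ∂μ)
          + ∫ ω, γ * ∑ x, I k ω * (J k x ω * Vt ω x) ∂μ :=
      integral_add (hintR k) (hintSum k)
    rw [h1, h2, integral_const_mul, integral_finset_sum _ (fun x _ => hint2 k x),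
      hA k]
    have h3 : ∫ ω, I k ω * Rk k ω ∂μ = d s * rbar s := hr k s
    rw [h3]
    congr 1
    exact congrArg (fun z => d s * rbar s + γ * z) (Finset.sum_congr rfl fun x _ => hB k x)
  -- put everything together
  have hmain : (fun ω => Vt1 ω s)
      = fun ω => Vt ω s + α * ∑ k : Fin N,
          I k ω * (Rk k ω + γ * Vt ω (Sk' k ω) - Vt ω s) := by
    funext ω; exact hVt1 ω s
  have htot : Integrable (fun ω => α * ∑ k : Fin N,
      I k ω * (Rk k ω + γ * Vt ω (Sk' k ω) - Vt ω s)) μ :=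
    (integrable_finset_sum _ (fun k _ => hgint k)).const_mul α
  rw [hmain, integral_add (hVt_int s) htot,
    integral_const_mul, integral_finset_sum _ (fun k _ => hgint k)]
  have hsum : ∑ k : Fin N, ∫ ω, I k ω * (Rk k ω + γ * Vt ω (Sk' k ω) - Vt ω s) ∂μ
      = (N : ℝ) * (d s * rbar s + γ * (∑ x, d s * P s x * ∫ ω, Vt ω x ∂μ)
          - d s * ∫ ω, Vt ω s ∂μ) := by
    rw [Finset.sum_congr rfl fun k _ => hgval k]
    simp [Finset.sum_const, Finset.card_fin, nsmul_eq_mul]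
    ring
  rw [hsum]
  have hx : ∑ x, d s * P s x * ∫ ω, Vt ω x ∂μ
      = d s * ∑ x, P s x * ∫ ω, Vt ω x ∂μ := by
    rw [Finset.mul_sum]; exact Finset.sum_congr rfl fun x _ => by ring
  rw [hx]
  ring
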